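/- arXiv:1510.01819 — 2 statements merged into one kernel-verified Lean document; each statement's English description precedes it below -/
import Mathlib

section
/- For all integers r ≥ 3 and b ≥ 1 there exists a finite set P of points in general position in the plane, partitioned into a set R of r red points and a set B of b blue points, such that every convex set C ⊆ ℝ² with |C ∩ R| ≥ ⌈(r+1)/2⌉ + 1 satisfies B ⊆ C. -/
open scoped Classical

noncomputable section BITsection

namespace BIT

open Real EuclideanGeometry

abbrev E := EuclideanSpace ℝ (Fin 2)

def pt (x y : ℝ) : E := WithLp.toLp 2 ![x, y]

@[simp] lemma pt_zero (x y : ℝ) : pt x y 0 = x := rfl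
@[simp] lemma pt_one (x y : ℝ) : pt x y 1 = y := rfl

lemma norm_pt (x y : ℝ) : ‖pt x y‖ = Real.sqrt (x^2 + y^2) := by
  rw [EuclideanSpace.norm_eq]
  simp [pt, Fin.sum_univ_two]

lemma pt_inj {x y x' y' : ℝ} (h : pt x y = pt x' y') : x = x' ∧ y = y' :=
  ⟨by simpa using congrArg (fun v : E => v 0) h, by simpa using congrArg (fun v : E => v 1) h⟩

lemma norm_pt_circle {δ θ : ℝ} (hδ : 0 ≤ δ) : ‖pt (δ * Real.cos θ) (δ * Real.sin θ)‖ = δ := by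
  rw [norm_pt]
  have : (δ * Real.cos θ)^2 + (δ * Real.sin θ)^2 = δ^2 := by
    have := Real.sin_sq_add_cos_sq θ; nlinarith
  rw [this, Real.sqrt_sq hδ]

lemma sphere_infinite {δ : ℝ} (hδ : 0 < δ) : (Metric.sphere (0:E) δ).Infinite := by
  have key : Set.InjOn (fun θ : ℝ => pt (δ * Real.cos θ) (δ * Real.sin θ)) (Set.Ioo 0 π) := by
    intro a ha b hb hab
    have h1 := (pt_inj hab).1
    have hc : Real.cos a = Real.cos b := mul_left_cancel₀ hδ.ne' h1
    exact Real.injOn_cos ⟨le_of_lt ha.1, le_of_lt ha.2⟩ ⟨le_of_lt hb.1, le_of_lt hb.2⟩ hc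
  have him : ((fun θ : ℝ => pt (δ * Real.cos θ) (δ * Real.sin θ)) '' (Set.Ioo 0 π)).Infinite :=
    Set.Infinite.image (fun x hx y hy => fun h => key hx hy h) (Set.Ioo_infinite Real.pi_pos)
  refine him.mono ?_
  rintro _ ⟨θ, -, rfl⟩
  simp [mem_sphere_iff_norm, norm_pt_circle hδ.le]

def GP (P : Finset E) : Prop :=
  ∀ p ∈ P, ∀ q ∈ P, ∀ s ∈ P, p ≠ q → p ≠ s → q ≠ s → ¬ Collinear ℝ ({p, q, s} : Set E)

lemma cospherical_sphere {δ : ℝ} {s : Set E} (hs : s ⊆ Metric.sphere (0:E) δ) :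
    Cospherical s :=
  ⟨0, δ, fun p hp => by simpa using hs hp⟩

lemma not_collinear_of_sphere {δ : ℝ} {p q r : E}
    (hp : p ∈ Metric.sphere (0:E) δ) (hq : q ∈ Metric.sphere (0:E) δ)
    (hr : r ∈ Metric.sphere (0:E) δ) (hpq : p ≠ q) (hpr : p ≠ r) (hqr : q ≠ r) :
    ¬ Collinear ℝ ({p, q, r} : Set E) := by
  refine affineIndependent_iff_not_collinear_set.1 ?_
  exact Cospherical.affineIndependent_of_ne
    (cospherical_sphere (by intro x hx; rcases hx with rfl | rfl | rfl <;> assumption))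
    hpq hpr hqr

lemma line_inter_sphere_finite {δ : ℝ} (q₁ q₂ : E) (h : q₁ ≠ q₂) :
    ({x : E | Collinear ℝ ({x, q₁, q₂} : Set E)} ∩ Metric.sphere (0:E) δ).Finite := by
  by_contra hinf
  have hinf' : ({x : E | Collinear ℝ ({x, q₁, q₂} : Set E)} ∩ Metric.sphere (0:E) δ).Infinite := hinf
  obtain ⟨t, hts, htc⟩ := hinf'.exists_subset_card_eq 3
  obtain ⟨a, b, c, hab, hac, hbc, rfl⟩ := Finset.card_eq_three.1 htc
  have ha := hts (by simp : a ∈ ({a,b,c} : Finset E))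
  have hb := hts (by simp : b ∈ ({a,b,c} : Finset E))
  have hc := hts (by simp : c ∈ ({a,b,c} : Finset E))
  have hcol : Collinear ℝ ({a, b, c} : Set E) := by
    have hma : a ∈ line[ℝ, q₁, q₂] :=
      (ha.1 : Collinear ℝ _).mem_affineSpan_of_mem_of_ne
        (by simp) (by simp) (by simp) h
    have hmb : b ∈ line[ℝ, q₁, q₂] :=
      (hb.1 : Collinear ℝ _).mem_affineSpan_of_mem_of_ne
        (by simp) (by simp) (by simp) h
    have hmc : c ∈ line[ℝ, q₁, q₂] :=
      (hc.1 : Collinear ℝ _).mem_affineSpan_of_mem_of_ne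
        (by simp) (by simp) (by simp) h
    exact collinear_triple_of_mem_affineSpan_pair hma hmb hmc
  exact not_collinear_of_sphere ha.2 hb.2 hc.2 hab hac hbc hcol

lemma exists_good_point (Q : Finset E) {δ : ℝ} (hδ : 0 < δ) :
    ∃ p : E, ‖p‖ = δ ∧ p ∉ Q ∧
      ∀ q₁ ∈ Q, ∀ q₂ ∈ Q, q₁ ≠ q₂ → ¬ Collinear ℝ ({p, q₁, q₂} : Set E) := by
  set Bad : Set E := ↑Q ∪ ⋃ q₁ ∈ Q, ⋃ q₂ ∈ Q, ⋃ (_ : q₁ ≠ q₂),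
      {x : E | Collinear ℝ ({x, q₁, q₂} : Set E)} with hBad
  have hfin : (Bad ∩ Metric.sphere (0:E) δ).Finite := by
    rw [hBad, Set.union_inter_distrib_right]
    refine Set.Finite.union (Q.finite_toSet.inter_of_left _) ?_
    rw [Set.iUnion₂_inter]
    refine Set.Finite.biUnion Q.finite_toSet fun q₁ _ => ?_
    rw [Set.iUnion₂_inter]
    refine Set.Finite.biUnion Q.finite_toSet fun q₂ _ => ?_
    rw [Set.iUnion_inter]
    exact Set.finite_iUnion fun h => line_inter_sphere_finite q₁ q₂ h
  have : (Metric.sphere (0:E) δ \ Bad).Nonempty := by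
    have : (Metric.sphere (0:E) δ \ (Bad ∩ Metric.sphere (0:E) δ)).Infinite :=
      (sphere_infinite hδ).diff hfin
    obtain ⟨p, hp⟩ := this.nonempty
    exact ⟨p, hp.1, fun h => hp.2 ⟨h, hp.1⟩⟩
  obtain ⟨p, hps, hpb⟩ := this
  refine ⟨p, by simpa using hps, fun h => hpb (Or.inl h), fun q₁ h₁ q₂ h₂ hne hcol => ?_⟩
  exact hpb (Or.inr (by simp only [Set.mem_iUnion]; exact ⟨q₁, h₁, q₂, h₂, hne, hcol⟩))

lemma gp_insert {Q : Finset E} {p : E} (hQ : GP Q)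
    (hnc : ∀ q₁ ∈ Q, ∀ q₂ ∈ Q, q₁ ≠ q₂ → ¬ Collinear ℝ ({p, q₁, q₂} : Set E)) :
    GP (insert p Q) := by
  intro a ha b hb c hc hab hac hbc
  simp only [Finset.mem_insert] at ha hb hc
  rcases ha with rfl | ha
  · rcases hb with rfl | hb
    · exact absurd rfl hab
    rcases hc with rfl | hc
    · exact absurd rfl hac
    exact hnc b hb c hc hbc
  · rcases hb with rfl | hb
    · rcases hc with rfl | hc
      · exact absurd rfl hbc
      intro hcol
      refine hnc a ha c hc hac ?_
      have e : ({b, a, c} : Set E) = {a, b, c} := by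
        ext x; simp only [Set.mem_insert_iff, Set.mem_singleton_iff]; tauto
      rw [e]; exact hcol
    · rcases hc with rfl | hc
      · intro hcol
        refine hnc a ha b hb hab ?_
        have e : ({c, a, b} : Set E) = {a, b, c} := by
          ext x; simp only [Set.mem_insert_iff, Set.mem_singleton_iff]; tauto
        rw [e]; exact hcol
      · exact hQ a ha b hb c hc hab hac hbc

lemma exists_blues (δ : ℝ) (hδ : 0 < δ) :
    ∀ (n : ℕ) (Q : Finset E), GP Q →
    ∃ B : Finset E, B.card = n ∧ Disjoint Q B ∧ (∀ β ∈ B, ‖β‖ = δ) ∧ GP (Q ∪ B) := by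
  intro n
  induction n with
  | zero => exact fun Q hQ => ⟨∅, by simp, by simp, by simp, by simpa using hQ⟩
  | succ n ih =>
    intro Q hQ
    obtain ⟨B, hcard, hdisj, hnorm, hgp⟩ := ih Q hQ
    obtain ⟨p, hpn, hpQ, hnc⟩ := exists_good_point (Q ∪ B) hδ
    refine ⟨insert p B, ?_, ?_, ?_, ?_⟩
    · rw [Finset.card_insert_of_notMem (fun h => hpQ (Finset.mem_union_right _ h)), hcard]
    · refine Finset.disjoint_left.2 fun a haQ haB => ?_
      rcases Finset.mem_insert.1 haB with rfl | haB
      · exact hpQ (Finset.mem_union_left _ haQ)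
      · exact (Finset.disjoint_left.1 hdisj haQ) haB
    · intro β hβ
      rcases Finset.mem_insert.1 hβ with rfl | hβ
      · exact hpn
      · exact hnorm β hβ
    · rw [Finset.union_insert]
      exact gp_insert hgp hnc

lemma window {x η : ℝ} (hη : 0 < η) (hηπ : η < π/2)
    (h : Real.cos x > Real.cos (π/2 + η)) :
    ∃ n : ℤ, |x - 2*π*n| < π/2 + η := by
  refine ⟨round (x / (2*π)), ?_⟩
  set n := round (x / (2*π)) with hn
  have h2π : (0:ℝ) < 2*π := by positivity
  have hb : |x - 2*π*n| ≤ π := by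
    have h1 : |x / (2*π) - n| ≤ 1/2 := by rw [abs_sub_comm, hn, abs_sub_comm]; exact abs_sub_round _
    have he : (x / (2*π) - n) * (2*π) = x - 2*π*n := by
      field_simp
    have h2 : |x - 2*π*n| = |x / (2*π) - n| * (2*π) := by
      rw [← he, abs_mul, abs_of_pos h2π]
    rw [h2]; nlinarith
  have hcos : Real.cos |x - 2*π*n| = Real.cos x := by
    rw [Real.cos_abs, show x - 2*π*n = x - n * (2*π) by ring, Real.cos_sub_int_mul_two_pi]
  by_contra hc
  push_neg at hc
  have : Real.cos |x - 2*π*n| ≤ Real.cos (π/2 + η) :=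
    Real.cos_le_cos_of_nonneg_of_le_pi (by positivity) hb hc
  rw [hcos] at this
  linarith

lemma counting (m : ℕ) (hmo : Odd m) (hm3 : 3 ≤ m) (φ : ℝ) (S : Finset ℕ)
    (hSm : ∀ j ∈ S, j < m)
    (hcos : ∀ j ∈ S, Real.cos (2*π*j/m - φ) > Real.cos (π/2 + π/(2*m))) :
    2 * S.card ≤ m + 1 := by
  have hπ : (0:ℝ) < π := Real.pi_pos
  have hm0 : (0:ℝ) < m := by positivity
  set η : ℝ := π/(2*m) with hη
  have hη0 : 0 < η := by positivity
  have hηπ : η < π/2 := by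
    have h3 : (3:ℝ) ≤ m := by exact_mod_cast hm3
    rw [hη, div_lt_div_iff₀ (by positivity) (by norm_num)]
    nlinarith
  set c : ℝ := m * φ / (2*π) with hc
  set q : ℝ := (m+1)/4 with hq
  have H : ∀ j ∈ S, ∃ z : ℤ, |((j:ℤ) - m*z : ℤ) - c| < q := by
    intro j hj
    obtain ⟨n, hn⟩ := window hη0 hηπ (hcos j hj)
    refine ⟨n, ?_⟩
    have hkey : (((j:ℤ) - m*n : ℤ) : ℝ) - c = (2*π*j/m - φ - 2*π*n) * m / (2*π) := by
      push_cast
      field_simp [hπ.ne', hm0.ne']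
      ring_nf
      rw [hc]; field_simp
    rw [hkey]
    have habs : |(2*π*j/m - φ - 2*π*n) * m / (2*π)| = |2*π*j/m - φ - 2*π*n| * m / (2*π) := by
      rw [abs_div, abs_mul, abs_of_pos hm0, abs_of_pos (by positivity : (0:ℝ) < 2*π)]
    rw [habs]
    have : (π/2 + η) * m / (2*π) = q := by
      rw [hη, hq]; field_simp; ring
    rw [← this]
    have h2 : |2*π*j/m - φ - 2*π*n| < π/2 + η := hn
    have hmpos : (0:ℝ) < m / (2*π) := by positivity
    calc |2*π*j/m - φ - 2*π*n| * m / (2*π) = |2*π*j/m - φ - 2*π*n| * (m / (2*π)) := by ring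
      _ < (π/2 + η) * (m / (2*π)) := by exact mul_lt_mul_of_pos_right h2 hmpos
      _ = (π/2 + η) * m / (2*π) := by ring
  choose! z hz using H
  set T : Finset ℤ := Finset.Ioo ⌊c - q⌋ ⌈c + q⌉ with hT
  have hmap : ∀ j ∈ S, ((j:ℤ) - m * z j) ∈ T := by
    intro j hj
    have h := hz j hj
    rw [abs_lt] at h
    rw [hT, Finset.mem_Ioo]
    constructor
    · have h1 : (⌊c - q⌋ : ℝ) < ((j:ℤ) - m * z j : ℤ) :=
        lt_of_le_of_lt (Int.floor_le _) (by linarith)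
      exact_mod_cast h1
    · have h1 : (((j:ℤ) - m * z j : ℤ) : ℝ) < (⌈c + q⌉ : ℝ) :=
        lt_of_lt_of_le (by linarith) (Int.le_ceil _)
      exact_mod_cast h1
  have hinj : Set.InjOn (fun j : ℕ => (j:ℤ) - m * z j) S := by
    intro j1 h1 j2 h2 he
    simp only at he
    have hdvd : (m:ℤ) ∣ ((j1:ℤ) - j2) := ⟨z j1 - z j2, by linarith [he]⟩
    have habs : |(j1:ℤ) - j2| < m := by
      have := hSm j1 h1; have := hSm j2 h2
      rw [abs_lt]; omega
    have := Int.eq_zero_of_abs_lt_dvd hdvd habs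
    omega
  have hcard : S.card ≤ T.card := Finset.card_le_card_of_injOn _ hmap hinj
  have hTcard : 2 * T.card ≤ m + 1 := by
    rw [hT, Int.card_Ioo]
    have h1 : (⌈c + q⌉ : ℝ) < c + q + 1 := Int.ceil_lt_add_one _
    have h2 : c - q - 1 < (⌊c - q⌋ : ℝ) := Int.sub_one_lt_floor _
    have key : 2 * (⌈c + q⌉ - ⌊c - q⌋ - 1 : ℤ) < (m:ℤ) + 3 := by
      have h5 : ((⌈c + q⌉ - ⌊c - q⌋ - 1 : ℤ) : ℝ) < 2*q + 1 := by push_cast; linarith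
      have h2q : 2*q = ((m:ℝ)+1)/2 := by rw [hq]; ring
      rw [h2q] at h5
      have h6 : (2 * (⌈c + q⌉ - ⌊c - q⌋ - 1 : ℤ) : ℝ) < (m:ℝ) + 3 := by
        push_cast at h5 ⊢; linarith
      exact_mod_cast h6
    obtain ⟨t, ht⟩ := hmo
    omega
  clear_value T
  calc 2 * S.card ≤ 2 * T.card := by omega
    _ ≤ m + 1 := hTcard

lemma f_decomp (f : E →L[ℝ] ℝ) (y : E) :
    f y = y 0 * f (pt 1 0) + y 1 * f (pt 0 1) := by
  have hy : y = y 0 • pt 1 0 + y 1 • pt 0 1 := by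
    ext i
    fin_cases i <;> simp [pt] <;> rfl
  calc f y = f (y 0 • pt 1 0 + y 1 • pt 0 1) := by rw [← hy]
    _ = y 0 * f (pt 1 0) + y 1 * f (pt 0 1) := by
        rw [map_add, map_smul, map_smul]; rfl

lemma polar {a c : ℝ} (h : ¬(a = 0 ∧ c = 0)) :
    ∃ ρ φ : ℝ, 0 < ρ ∧ a = ρ * Real.cos φ ∧ c = ρ * Real.sin φ := by
  set z : ℂ := ⟨a, c⟩ with hz
  have hz0 : z ≠ 0 := by
    intro h0
    exact h ⟨congrArg Complex.re h0, congrArg Complex.im h0⟩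
  have habs : 0 < ‖z‖ := norm_pos_iff.mpr hz0
  refine ⟨‖z‖, Complex.arg z, habs, ?_, ?_⟩
  · rw [Complex.cos_arg hz0]
    field_simp [hz]; rfl
  · rw [Complex.sin_arg]
    field_simp [hz]; rfl

lemma ceil_eq (r m : ℕ) (hr : 3 ≤ r) (hm : m = if Even r then r + 1 else r) :
    (⌈((r : ℚ) + 1) / 2⌉ : ℤ) = (m + 1) / 2 := by
  rcases Nat.even_or_odd r with he | ho
  · obtain ⟨t, rfl⟩ := he
    rw [hm, if_pos (by exact ⟨t, rfl⟩)]
    have h1 : (⌈((t + t : ℕ) + 1 : ℚ) / 2⌉ : ℤ) = t + 1 := by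
      rw [Int.ceil_eq_iff]
      constructor <;> push_cast <;> [linarith; linarith]
    rw [h1]
    omega
  · obtain ⟨t, rfl⟩ := ho
    rw [hm, if_neg (by simp [Nat.even_add_one, parity_simps])]
    have h1 : (⌈((2*t + 1 : ℕ) + 1 : ℚ) / 2⌉ : ℤ) = t + 1 := by
      rw [Int.ceil_eq_iff]
      constructor <;> push_cast <;> [linarith; linarith]
    rw [h1]
    omega

end BIT

end BITsection

set_option maxHeartbeats 1000000 in
open Real in
/-- Tightness construction: for all `r ≥ 3`, `b ≥ 1` there is a configuration of
`r` red and `b` blue points in general position such that every convex set with at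
least `⌈(r+1)/2⌉ + 1` red points contains all the blue points. -/
theorem balanced_island_tightness (r b : ℕ) (hr : 3 ≤ r) (hb : 1 ≤ b) :
    ∃ P R B : Finset (EuclideanSpace ℝ (Fin 2)),
      R ∪ B = P ∧ Disjoint R B ∧ R.card = r ∧ B.card = b ∧
      (∀ p ∈ P, ∀ q ∈ P, ∀ s ∈ P, p ≠ q → p ≠ s → q ≠ s →
        ¬ Collinear ℝ ({p, q, s} : Set (EuclideanSpace ℝ (Fin 2)))) ∧
      ∀ C : Set (EuclideanSpace ℝ (Fin 2)), Convex ℝ C →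
        (⌈((r : ℚ) + 1) / 2⌉ + 1 ≤ ((C ∩ (R : Set (EuclideanSpace ℝ (Fin 2)))).ncard : ℤ)) →
        (B : Set (EuclideanSpace ℝ (Fin 2))) ⊆ C := by
  classical
  have hπ : (0:ℝ) < π := Real.pi_pos
  set m : ℕ := if Even r then r + 1 else r with hm
  have hrm : r ≤ m := by rw [hm]; split <;> omega
  have hm3 : 3 ≤ m := le_trans hr hrm
  have hmo : Odd m := by
    rw [hm]; split_ifs with h
    · exact Even.add_one h
    · exact Nat.not_even_iff_odd.1 h
  have hm0 : (0:ℝ) < m := by positivity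
  set v : ℕ → BIT.E := fun j => BIT.pt (Real.cos (2*π*j/m)) (Real.sin (2*π*j/m)) with hv
  have hvnorm : ∀ j, ‖v j‖ = 1 := by
    intro j
    rw [hv]
    simp only
    rw [show Real.cos (2*π*j/m) = 1 * Real.cos (2*π*j/m) by ring,
        show Real.sin (2*π*j/m) = 1 * Real.sin (2*π*j/m) by ring]
    exact BIT.norm_pt_circle (by norm_num)
  have hvsphere : ∀ j, v j ∈ Metric.sphere (0:BIT.E) 1 := by
    intro j
    rw [Metric.mem_sphere, dist_zero_right]
    exact hvnorm j
  have hvinj : ∀ j1 < m, ∀ j2 < m, v j1 = v j2 → j1 = j2 := by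
    intro j1 hj1 j2 hj2 hve
    rw [hv] at hve
    simp only at hve
    obtain ⟨hcse, hsne⟩ := BIT.pt_inj hve
    have h1 : Real.cos (2*π*j1/m - 2*π*j2/m) = 1 := by
      rw [Real.cos_sub, hcse, hsne]
      have := Real.sin_sq_add_cos_sq (2*π*j2/m)
      nlinarith
    have hθ1 : 0 ≤ 2*π*(j1:ℝ)/m := by positivity
    have hθ2 : 0 ≤ 2*π*(j2:ℝ)/m := by positivity
    have hub : ∀ j : ℕ, j < m → 2*π*(j:ℝ)/m < 2*π := by
      intro j hj
      rw [div_lt_iff₀ hm0]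
      have : (j:ℝ) < m := by exact_mod_cast hj
      nlinarith
    have h2 := (Real.cos_eq_one_iff_of_lt_of_lt
      (by linarith [hub j2 hj2]) (by linarith [hub j1 hj1])).1 h1
    have h3 : (j1:ℝ) = j2 := by
      have h2' : 2*π*(j1:ℝ)/m = 2*π*(j2:ℝ)/m := by linarith
      have hne : 2*π/(m:ℝ) ≠ 0 := by positivity
      have e1 : 2*π*(j1:ℝ)/m = (2*π/(m:ℝ)) * j1 := by ring
      have e2 : 2*π*(j2:ℝ)/m = (2*π/(m:ℝ)) * j2 := by ring
      exact mul_left_cancel₀ hne (by rw [← e1, ← e2, h2'])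
    exact_mod_cast h3
  set R : Finset BIT.E := (Finset.range r).image v with hR
  have hinjR : Set.InjOn v ↑(Finset.range r) := by
    intro a ha b hb h
    simp only [Finset.coe_range, Set.mem_Iio] at ha hb
    exact hvinj a (lt_of_lt_of_le ha hrm) b (lt_of_lt_of_le hb hrm) h
  have hRcard : R.card = r := by
    rw [hR, Finset.card_image_of_injOn hinjR, Finset.card_range]
  have hGPR : BIT.GP R := by
    intro p hp q hq s hs hpq hps hqs
    rw [hR] at hp hq hs
    obtain ⟨i, -, rfl⟩ := Finset.mem_image.1 hp
    obtain ⟨j, -, rfl⟩ := Finset.mem_image.1 hq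
    obtain ⟨l, -, rfl⟩ := Finset.mem_image.1 hs
    exact BIT.not_collinear_of_sphere (hvsphere i) (hvsphere j) (hvsphere l) hpq hps hqs
  have hη0 : 0 < π/(2*(m:ℝ)) := by positivity
  have hηlt : π/(2*(m:ℝ)) < π := by
    have h3 : (3:ℝ) ≤ m := by exact_mod_cast hm3
    rw [div_lt_iff₀ (by positivity)]
    nlinarith
  set δ : ℝ := Real.sin (π/(2*m)) / 2 with hδ
  have hsinpos : 0 < Real.sin (π/(2*(m:ℝ))) := Real.sin_pos_of_pos_of_lt_pi hη0 hηlt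
  have hδ0 : 0 < δ := by rw [hδ]; linarith
  obtain ⟨B, hBcard, hdisj, hBnorm, hGP⟩ := BIT.exists_blues δ hδ0 b R hGPR
  refine ⟨R ∪ B, R, B, rfl, hdisj, hRcard, hBcard, hGP, ?_⟩
  intro C hC hcount β hβ
  have hβB : β ∈ B := hβ
  -- rewrite the ceiling
  rw [BIT.ceil_eq r m hr hm] at hcount
  set S : Finset ℕ := (Finset.range r).filter (fun j => v j ∈ C) with hS
  have hSsub : ∀ j ∈ S, j < m := by
    intro j hj
    rw [hS, Finset.mem_filter, Finset.mem_range] at hj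
    exact lt_of_lt_of_le hj.1 hrm
  have hcardeq : (C ∩ (R : Set BIT.E)).ncard = S.card := by
    have h1 : C ∩ (R : Set BIT.E) = ↑(R.filter (fun x => x ∈ C)) := by
      ext x
      simp only [Finset.coe_filter, Set.mem_inter_iff, Set.mem_setOf_eq, Finset.mem_coe]
      tauto
    rw [h1, Set.ncard_coe_finset, hR, Finset.filter_image, ← hS]
    refine Finset.card_image_of_injOn (fun a ha b hb h => ?_)
    exact hvinj a (hSsub a ha) b (hSsub b hb) h
  rw [hcardeq] at hcount
  have hS2 : m + 3 ≤ 2 * S.card := by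
    obtain ⟨t, ht⟩ := hmo
    omega
  -- the convex hull of the selected red points
  set T : Finset BIT.E := S.image v with hT
  have hTC : (T : Set BIT.E) ⊆ C := by
    intro x hx
    rw [hT] at hx
    obtain ⟨j, hj, rfl⟩ := Finset.mem_image.1 (by exact_mod_cast hx)
    rw [hS, Finset.mem_filter] at hj
    exact hj.2
  by_cases hβK : β ∈ convexHull ℝ (T : Set BIT.E)
  · exact convexHull_min hTC hC hβK
  exfalso
  have hKclosed : IsClosed (convexHull ℝ (T : Set BIT.E)) :=
    (T.finite_toSet.isCompact_convexHull ℝ).isClosed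
  obtain ⟨f, u, hfu, hK⟩ :=
    geometric_hahn_banach_point_closed (convex_convexHull ℝ _) hKclosed hβK
  set a : ℝ := f (BIT.pt 1 0) with ha'
  set c : ℝ := f (BIT.pt 0 1) with hc'
  have hfv : ∀ j, f (v j) = Real.cos (2*π*j/m) * a + Real.sin (2*π*j/m) * c := by
    intro j
    rw [BIT.f_decomp f (v j), hv]
    simp only [BIT.pt_zero, BIT.pt_one]; rfl
  have hfβ : f β = β 0 * a + β 1 * c := BIT.f_decomp f β
  have hSne : S.Nonempty := Finset.card_pos.1 (by omega)
  have hfvK : ∀ j ∈ S, u < f (v j) := by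
    intro j hj
    refine hK _ (subset_convexHull ℝ _ ?_)
    rw [hT]
    exact_mod_cast Finset.mem_image_of_mem v hj
  by_cases hac : a = 0 ∧ c = 0
  · obtain ⟨j0, hj0⟩ := hSne
    have h1 := hfvK j0 hj0
    rw [hfv j0, hac.1, hac.2] at h1
    rw [hfβ, hac.1, hac.2] at hfu
    simp at h1 hfu
    linarith
  obtain ⟨ρ, φ, hρ, haρ, hcρ⟩ := BIT.polar hac
  -- norm of β
  have hβnorm : ‖β‖ = δ := hBnorm β hβB
  have hβsq : (β 0)^2 + (β 1)^2 = δ^2 := by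
    have h := EuclideanSpace.norm_eq β
    rw [Fin.sum_univ_two, hβnorm] at h
    have h2 : δ^2 = ‖β 0‖^2 + ‖β 1‖^2 := by
      rw [h, Real.sq_sqrt (by positivity)]
    rw [h2]
    simp [Real.norm_eq_abs, sq_abs]
  have hsum : a^2 + c^2 = ρ^2 := by
    rw [haρ, hcρ]
    have := Real.sin_sq_add_cos_sq φ
    nlinarith
  have hρδ : f β ≥ -(ρ * δ) := by
    rw [hfβ]
    set x0 : ℝ := β 0 with hx0
    set x1 : ℝ := β 1 with hx1
    have hCS : (x0 * a + x1 * c)^2 ≤ ρ^2 * δ^2 := by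
      have hid : ρ^2 * δ^2 - (x0 * a + x1 * c)^2 = (a * x1 - c * x0)^2 := by
        rw [← hsum, ← hβsq]; ring
      nlinarith [sq_nonneg (a * x1 - c * x0)]
    by_contra hcon
    push_neg at hcon
    have hpos : 0 < ρ * δ := mul_pos hρ hδ0
    nlinarith
  have hcosS : ∀ j ∈ S, Real.cos (2*π*j/m - φ) > Real.cos (π/2 + π/(2*m)) := by
    intro j hj
    have h1 : u < f (v j) := hfvK j hj
    have h2 : f (v j) = ρ * Real.cos (2*π*j/m - φ) := by
      rw [hfv j, haρ, hcρ, Real.cos_sub]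
      ring
    have h3 : ρ * (-δ) < ρ * Real.cos (2*π*j/m - φ) := by
      rw [← h2]
      have : -(ρ * δ) = ρ * (-δ) := by ring
      linarith [hfu, hρδ]
    have h4 : -δ < Real.cos (2*π*j/m - φ) := (mul_lt_mul_iff_right₀ hρ).1 h3
    have h5 : Real.cos (π/2 + π/(2*(m:ℝ))) = -Real.sin (π/(2*m)) := by
      rw [add_comm, Real.cos_add_pi_div_two]
    rw [h5]
    have h6 : -Real.sin (π/(2*(m:ℝ))) < -δ := by rw [hδ]; linarith
    linarith
  have := BIT.counting m hmo hm3 φ S hSsub hcosS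
  omega
end

section
/- Let P be a finite set of n points in general position in the plane, let k be a positive integer, and let I and J be islands of P with |I| = |J| = k. Then there exists an integer m ≤ 3n and a sequence I = I₀, I₁, …, I_m = J such that each I_j is an island of P with |I_j| = k, and for every j with 0 ≤ j < m the symmetric difference I_j Δ I_{j+1} consists of exactly two points. -/
open scoped Classical
open scoped symmDiff

section IslandAux

variable {V : Type*} [AddCommGroup V] [Module ℝ V]

/-- exchange lemma -/
lemma island_exchange {S : Set V} {q r : V}
    (hq : q ∉ convexHull ℝ S) (h1 : q ∈ convexHull ℝ (insert r S))
    (h2 : r ∈ convexHull ℝ (insert q S)) : q = r := by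
  rcases S.eq_empty_or_nonempty with hS | hS
  · subst hS
    simpa using h1
  · rw [convexHull_insert hS, mem_convexJoin] at h1 h2
    obtain ⟨r', hr', z, hz, hseg1⟩ := h1
    obtain ⟨q', hq', w, hw, hseg2⟩ := h2
    rw [Set.mem_singleton_iff] at hr' hq'
    rw [hr'] at hseg1
    rw [hq'] at hseg2
    obtain ⟨a, a', ha, ha', haa, hqe⟩ := hseg1
    obtain ⟨b, b', hb, hb', hbb, hre⟩ := hseg2
    by_cases hab : a * b = 1
    · have ha1 : a = 1 := by nlinarith
      have hb1 : b = 1 := by nlinarith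
      have ha'0 : a' = 0 := by linarith
      rw [ha1, ha'0, one_smul, zero_smul, add_zero] at hqe
      exact hqe.symm
    · exfalso
      have hab1 : a * b < 1 := lt_of_le_of_ne (by nlinarith) hab
      set c : ℝ := 1 - a * b with hc
      have hcpos : 0 < c := by simp [hc]; linarith
      have e1 : q = (a*b)•q + ((a*b')•w + a'•z) := by
        calc q = a • r + a' • z := hqe.symm
          _ = a • (b • q + b' • w) + a' • z := by rw [hre]
          _ = (a*b)•q + ((a*b')•w + a'•z) := by
              rw [smul_add, smul_smul, smul_smul, add_assoc]
      have e2 : q - (a*b)•q = (a*b')•w + a'•z := sub_eq_of_eq_add' e1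
      have e3 : c • q = (a*b')•w + a'•z := by
        rw [hc, sub_smul, one_smul]; exact e2
      have e4 : q = (c⁻¹*(a*b'))•w + (c⁻¹*a')•z := by
        have : q = c⁻¹ • ((a*b')•w + a'•z) := by
          rw [← e3, smul_smul, inv_mul_cancel₀ hcpos.ne', one_smul]
        rw [this, smul_add, smul_smul, smul_smul]
      have hsum : c⁻¹*(a*b') + c⁻¹*a' = 1 := by
        rw [← mul_add]
        have : a*b' + a' = c := by rw [hc]; linear_combination a * hbb + haa
        rw [this, inv_mul_cancel₀ hcpos.ne']
      have : q ∈ convexHull ℝ S := by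
        rw [e4]
        exact (convex_convexHull ℝ S) hw hz (by positivity)
          (by positivity) hsum
      exact hq this

/-- grow lemma: add a point to an island inside a convex region -/
lemma island_grow (P : Finset V) {S : Finset V} {H : Set V} (hHconv : Convex ℝ H)
    (hSisl : convexHull ℝ (S : Set V) ∩ (P : Set V) = (S : Set V))
    (hSH : (S : Set V) ⊆ H)
    (hX : (P.filter (fun x => x ∈ H ∧ x ∉ S)).Nonempty) :
    ∃ q ∈ P, q ∈ H ∧ q ∉ S ∧
      convexHull ℝ ((insert q S : Finset V) : Set V) ∩ (P : Set V)
        = ((insert q S : Finset V) : Set V) := by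
  classical
  set X := P.filter (fun x => x ∈ H ∧ x ∉ S) with hXdef
  obtain ⟨q, hqX, hqmin⟩ := X.exists_min_image
    (fun y => (P.filter (fun z => z ∈ convexHull ℝ (insert y (S : Set V)))).card) hX
  rw [hXdef, Finset.mem_filter] at hqX
  obtain ⟨hqP, hqH, hqS⟩ := hqX
  have hqnc : q ∉ convexHull ℝ (S : Set V) := by
    intro h
    exact hqS (by exact_mod_cast (hSisl ▸ Set.mem_inter h (by exact_mod_cast hqP)))
  refine ⟨q, hqP, hqH, hqS, ?_⟩
  have hins : ((insert q S : Finset V) : Set V) = insert q (S : Set V) := by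
    simp
  rw [hins]
  have hsubH : convexHull ℝ (insert q (S : Set V)) ⊆ H :=
    convexHull_min (Set.insert_subset hqH hSH) hHconv
  apply Set.Subset.antisymm
  · rintro x ⟨hxconv, hxP⟩
    by_contra hx
    have hxS : x ∉ (S : Set V) := fun h => hx (Set.mem_insert_of_mem _ h)
    have hxq : x ≠ q := fun h => hx (h ▸ Set.mem_insert _ _)
    have hxX : x ∈ X := by
      rw [hXdef, Finset.mem_filter]
      exact ⟨by exact_mod_cast hxP, hsubH hxconv, by exact_mod_cast hxS⟩
    have hqnx : q ∉ convexHull ℝ (insert x (S : Set V)) := by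
      intro h
      exact hxq (island_exchange hqnc h hxconv).symm
    have hmono : convexHull ℝ (insert x (S : Set V)) ⊆ convexHull ℝ (insert q (S : Set V)) :=
      convexHull_min (Set.insert_subset hxconv
        ((Set.subset_insert _ _).trans (subset_convexHull ℝ _))) (convex_convexHull ℝ _)
    have hss : P.filter (fun z => z ∈ convexHull ℝ (insert x (S : Set V))) ⊂
        P.filter (fun z => z ∈ convexHull ℝ (insert q (S : Set V))) := by
      constructor
      · intro z hz
        rw [Finset.mem_filter] at hz ⊢
        exact ⟨hz.1, hmono hz.2⟩
      · intro hsub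
        have hq1 : q ∈ P.filter (fun z => z ∈ convexHull ℝ (insert q (S : Set V))) := by
          rw [Finset.mem_filter]
          exact ⟨hqP, subset_convexHull ℝ _ (Set.mem_insert _ _)⟩
        have := hsub hq1
        rw [Finset.mem_filter] at this
        exact hqnx this.2
    exact absurd (hqmin x hxX) (by simpa using Finset.card_lt_card hss)
  · have hSP : (S : Set V) ⊆ (P : Set V) := by
      rw [← hSisl]; exact Set.inter_subset_right
    intro x hx
    rcases Set.mem_insert_iff.mp hx with h | h
    · subst h
      exact ⟨subset_convexHull ℝ _ (Set.mem_insert _ _), by exact_mod_cast hqP⟩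
    · exact ⟨subset_convexHull ℝ _ (Set.mem_insert_of_mem _ h), hSP h⟩

/-- shrink lemma: removing the strict maximizer of a linear functional keeps an island -/
lemma island_shrink (P : Finset V) {I : Finset V} {ℓ : V → ℝ} (hlin : IsLinearMap ℝ ℓ)
    (hIisl : convexHull ℝ (I : Set V) ∩ (P : Set V) = (I : Set V))
    {a : V} (ha : a ∈ I) (hmax : ∀ x ∈ I, x ≠ a → ℓ x < ℓ a) :
    convexHull ℝ ((I.erase a : Finset V) : Set V) ∩ (P : Set V)
      = ((I.erase a : Finset V) : Set V) := by
  classical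
  have hsubH : convexHull ℝ ((I.erase a : Finset V) : Set V) ⊆ {w | ℓ w < ℓ a} := by
    apply convexHull_min _ (convex_halfSpace_lt hlin _)
    intro x hx
    rw [Finset.coe_erase, Set.mem_diff, Set.mem_singleton_iff] at hx
    exact hmax x (by exact_mod_cast hx.1) hx.2
  have hanotin : a ∉ convexHull ℝ ((I.erase a : Finset V) : Set V) := by
    intro h
    simpa using hsubH h
  apply Set.Subset.antisymm
  · rintro x ⟨hxconv, hxP⟩
    have hxI : x ∈ (I : Set V) := by
      rw [← hIisl]
      exact ⟨convexHull_mono (by exact_mod_cast Finset.erase_subset a I) hxconv, hxP⟩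
    have hxa : x ≠ a := fun h => hanotin (h ▸ hxconv)
    rw [Finset.coe_erase]
    exact ⟨hxI, hxa⟩
  · intro x hx
    have hxI : x ∈ (I : Set V) := by
      rw [Finset.coe_erase] at hx; exact hx.1
    have hIP : (I : Set V) ⊆ (P : Set V) := by
      rw [← hIisl]; exact Set.inter_subset_right
    exact ⟨subset_convexHull ℝ _ hx, hIP hxI⟩

/-- existence of a linear functional injective on a finite planar set -/
lemma exists_generic_functional (P : Finset (EuclideanSpace ℝ (Fin 2))) :
    ∃ ℓ : EuclideanSpace ℝ (Fin 2) → ℝ, IsLinearMap ℝ ℓ ∧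
      ∀ p ∈ P, ∀ q ∈ P, p ≠ q → ℓ p ≠ ℓ q := by
  classical
  set B : Finset ℝ := (P ×ˢ P).image
    (fun pq => (pq.2 0 - pq.1 0) / (pq.1 1 - pq.2 1)) with hB
  obtain ⟨c, hc⟩ := Infinite.exists_notMem_finset B
  refine ⟨fun x => x 0 + c * x 1, ⟨?_, ?_⟩, ?_⟩
  · intro x y
    simp [PiLp.add_apply]
    ring
  · intro t x
    simp [PiLp.smul_apply, smul_eq_mul]
    ring
  · intro p hp q hq hpq heq
    have heq' : p 0 + c * p 1 = q 0 + c * q 1 := heq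
    by_cases h1 : p 1 = q 1
    · have h0 : p 0 = q 0 := by rw [h1] at heq'; linarith
      apply hpq
      ext i
      fin_cases i <;> assumption
    · apply hc
      rw [hB]
      apply Finset.mem_image.mpr
      refine ⟨(p, q), Finset.mem_product.mpr ⟨hp, hq⟩, ?_⟩
      show (q 0 - p 0) / (p 1 - q 1) = c
      rw [div_eq_iff (sub_ne_zero.mpr h1)]
      linarith

noncomputable def sweep (P : Finset V) (ℓ : V → ℝ) (I : Finset V) : ℕ :=
  (P.filter fun x => ∃ y ∈ I, ℓ x ≤ ℓ y).card

lemma sweep_ge (P : Finset V) (ℓ : V → ℝ) {I : Finset V} (hI : I ⊆ P) :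
    I.card ≤ sweep P ℓ I := by
  classical
  apply Finset.card_le_card
  intro x hx
  exact Finset.mem_filter.mpr ⟨hI hx, x, hx, le_refl _⟩

lemma sweep_le (P : Finset V) (ℓ : V → ℝ) (I : Finset V) :
    sweep P ℓ I ≤ P.card := Finset.card_le_card (Finset.filter_subset _ _)

lemma sweep_filter_eq (P : Finset V) (ℓ : V → ℝ) {I : Finset V} {a : V}
    (ha : a ∈ I) (hamax : ∀ x ∈ I, ℓ x ≤ ℓ a) :
    (P.filter fun x => ∃ y ∈ I, ℓ x ≤ ℓ y) = P.filter (fun x => ℓ x ≤ ℓ a) := by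
  classical
  apply Finset.filter_congr
  intro x _
  constructor
  · rintro ⟨y, hy, hxy⟩; exact le_trans hxy (hamax y hy)
  · intro h; exact ⟨a, ha, h⟩

lemma sweep_eq_min {P : Finset V} {ℓ : V → ℝ}
    (hinj : ∀ p ∈ P, ∀ q ∈ P, p ≠ q → ℓ p ≠ ℓ q) {I J : Finset V} {k : ℕ} (hk : 1 ≤ k)
    (hI : I ⊆ P) (hJ : J ⊆ P) (hIk : I.card = k) (hJk : J.card = k)
    (hsI : sweep P ℓ I = k) (hsJ : sweep P ℓ J = k) : I = J := by
  classical
  have hne : I.Nonempty := Finset.card_pos.mp (by omega)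
  have hneJ : J.Nonempty := Finset.card_pos.mp (by omega)
  obtain ⟨a, ha, hamax⟩ := I.exists_max_image ℓ hne
  obtain ⟨b, hb, hbmax⟩ := J.exists_max_image ℓ hneJ
  have hIf : I = P.filter (fun x => ℓ x ≤ ℓ a) := by
    apply Finset.eq_of_subset_of_card_le
    · intro x hx
      exact Finset.mem_filter.mpr ⟨hI hx, hamax x hx⟩
    · rw [← sweep_filter_eq P ℓ ha hamax]
      rw [show (P.filter fun x => ∃ y ∈ I, ℓ x ≤ ℓ y).card = sweep P ℓ I from rfl, hsI, hIk]
  have hJf : J = P.filter (fun x => ℓ x ≤ ℓ b) := by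
    apply Finset.eq_of_subset_of_card_le
    · intro x hx
      exact Finset.mem_filter.mpr ⟨hJ hx, hbmax x hx⟩
    · rw [← sweep_filter_eq P ℓ hb hbmax]
      rw [show (P.filter fun x => ∃ y ∈ J, ℓ x ≤ ℓ y).card = sweep P ℓ J from rfl, hsJ, hJk]
  rcases le_total (ℓ a) (ℓ b) with hab | hab
  · apply Finset.eq_of_subset_of_card_le
    · intro x hx
      rw [hIf, Finset.mem_filter] at hx
      rw [hJf, Finset.mem_filter]
      exact ⟨hx.1, le_trans hx.2 hab⟩
    · omega
  · symm
    apply Finset.eq_of_subset_of_card_le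
    · intro x hx
      rw [hJf, Finset.mem_filter] at hx
      rw [hIf, Finset.mem_filter]
      exact ⟨hx.1, le_trans hx.2 hab⟩
    · omega

lemma island_step (P : Finset V) {ℓ : V → ℝ} (hlin : IsLinearMap ℝ ℓ)
    (hinj : ∀ p ∈ P, ∀ q ∈ P, p ≠ q → ℓ p ≠ ℓ q)
    {I : Finset V} {k : ℕ} (hk : 1 ≤ k) (hI : I ⊆ P)
    (hIisl : convexHull ℝ (I : Set V) ∩ (P : Set V) = (I : Set V))
    (hIk : I.card = k) (ht : k < sweep P ℓ I) :
    ∃ I' : Finset V, I' ⊆ P ∧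
      convexHull ℝ (I' : Set V) ∩ (P : Set V) = (I' : Set V) ∧
      I'.card = k ∧ (I ∆ I').card = 2 ∧ sweep P ℓ I' < sweep P ℓ I := by
  classical
  have hne : I.Nonempty := Finset.card_pos.mp (by omega)
  obtain ⟨a, ha, hamax⟩ := I.exists_max_image ℓ hne
  have hstrict : ∀ x ∈ I, x ≠ a → ℓ x < ℓ a :=
    fun x hx hxa => lt_of_le_of_ne (hamax x hx) (hinj x (hI hx) a (hI ha) hxa)
  set S := I.erase a with hS
  set B := P.filter (fun x => ℓ x < ℓ a) with hBdef
  have hAins : P.filter (fun x => ℓ x ≤ ℓ a) = insert a B := by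
    ext x
    rw [Finset.mem_insert, hBdef, Finset.mem_filter, Finset.mem_filter]
    constructor
    · rintro ⟨hxP, hxle⟩
      by_cases hxa : x = a
      · exact Or.inl hxa
      · exact Or.inr ⟨hxP, lt_of_le_of_ne hxle (hinj x hxP a (hI ha) hxa)⟩
    · rintro (h | ⟨hxP, hlt⟩)
      · subst h; exact ⟨hI ha, le_refl _⟩
      · exact ⟨hxP, le_of_lt hlt⟩
  have haB : a ∉ B := by
    rw [hBdef, Finset.mem_filter]
    rintro ⟨-, h⟩; exact lt_irrefl _ h
  have hsweepI : sweep P ℓ I = B.card + 1 := by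
    rw [sweep, sweep_filter_eq P ℓ ha hamax, hAins, Finset.card_insert_of_notMem haB]
  have hScard : S.card = k - 1 := by rw [hS, Finset.card_erase_of_mem ha, hIk]
  have hSB : S ⊆ B := by
    intro x hx
    rw [hBdef, Finset.mem_filter]
    exact ⟨hI (Finset.mem_of_mem_erase hx),
      hstrict x (Finset.mem_of_mem_erase hx) (Finset.ne_of_mem_erase hx)⟩
  have hSisl := island_shrink P hlin hIisl ha hstrict
  have hXne : (P.filter (fun x => x ∈ {w | ℓ w < ℓ a} ∧ x ∉ S)).Nonempty := by
    have hnsub : ¬ B ⊆ S := by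
      intro h
      have := Finset.card_le_card h
      omega
    obtain ⟨x, hxB, hxS⟩ := Finset.not_subset.mp hnsub
    rw [hBdef, Finset.mem_filter] at hxB
    exact ⟨x, Finset.mem_filter.mpr ⟨hxB.1, hxB.2, hxS⟩⟩
  obtain ⟨q, hqP, hqH, hqS, hq'isl⟩ := island_grow P
    (convex_halfSpace_lt hlin (ℓ a)) hSisl
    (fun x hx => by
      rw [Finset.mem_coe] at hx
      exact hstrict x (Finset.mem_of_mem_erase hx) (Finset.ne_of_mem_erase hx)) hXne
  rw [Set.mem_setOf_eq] at hqH
  refine ⟨insert q S, ?_, hq'isl, ?_, ?_, ?_⟩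
  · exact Finset.insert_subset hqP ((Finset.erase_subset a I).trans hI)
  · rw [Finset.card_insert_of_notMem hqS, hScard]; omega
  · have haS : a ∉ S := Finset.notMem_erase a I
    have haq : a ≠ q := fun h => lt_irrefl _ (h ▸ hqH)
    have hIins : I = insert a S := (Finset.insert_erase ha).symm
    have : I ∆ (insert q S) = {a, q} := by
      ext x
      rw [Finset.mem_symmDiff, hIins]
      simp only [Finset.mem_insert, Finset.mem_singleton]
      constructor
      · rintro (⟨h1, h2⟩ | ⟨h1, h2⟩)
        · rcases h1 with h | h
          · exact Or.inl h
          · exact absurd (Or.inr h) h2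
        · rcases h1 with h | h
          · exact Or.inr h
          · exact absurd (Or.inr h) h2
      · rintro (h | h)
        · subst h
          exact Or.inl ⟨Or.inl rfl, by
            rintro (h | h)
            · exact haq h
            · exact haS h⟩
        · subst h
          exact Or.inr ⟨Or.inl rfl, by
            rintro (h | h)
            · exact haq h.symm
            · exact hqS h⟩
    rw [this, Finset.card_pair haq]
  · have hsub : (P.filter fun x => ∃ y ∈ insert q S, ℓ x ≤ ℓ y) ⊆ B := by
      intro x hx
      rw [Finset.mem_filter] at hx
      obtain ⟨hxP, y, hy, hxy⟩ := hx
      rw [hBdef, Finset.mem_filter]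
      refine ⟨hxP, lt_of_le_of_lt hxy ?_⟩
      rcases Finset.mem_insert.mp hy with h | h
      · exact h ▸ hqH
      · exact hstrict y (Finset.mem_of_mem_erase h) (Finset.ne_of_mem_erase h)
    have := Finset.card_le_card hsub
    rw [sweep]
    omega

lemma island_chain (P : Finset V) {ℓ : V → ℝ} (hlin : IsLinearMap ℝ ℓ)
    (hinj : ∀ p ∈ P, ∀ q ∈ P, p ≠ q → ℓ p ≠ ℓ q) (k : ℕ) (hk : 1 ≤ k) :
    ∀ N : ℕ, ∀ I J : Finset V, I ⊆ P → J ⊆ P →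
    convexHull ℝ (I : Set V) ∩ (P : Set V) = (I : Set V) →
    convexHull ℝ (J : Set V) ∩ (P : Set V) = (J : Set V) →
    I.card = k → J.card = k → sweep P ℓ I + sweep P ℓ J ≤ N →
    ∃ (m : ℕ) (f : ℕ → Finset V), m + 2 * k ≤ sweep P ℓ I + sweep P ℓ J ∧
      f 0 = I ∧ f m = J ∧
      (∀ j ≤ m, f j ⊆ P ∧
        convexHull ℝ (f j : Set V) ∩ (P : Set V) = (f j : Set V) ∧ (f j).card = k) ∧
      (∀ j < m, (f j ∆ f (j + 1)).card = 2) := by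
  intro N
  induction N with
  | zero =>
    intro I J hI hJ hIisl hJisl hIk hJk hN
    have := sweep_ge P ℓ hI
    omega
  | succ N ih =>
    intro I J hI hJ hIisl hJisl hIk hJk hN
    by_cases h1 : k < sweep P ℓ I
    · obtain ⟨I', hI'P, hI'isl, hI'k, hI'sd, hI'sw⟩ :=
        island_step P hlin hinj hk hI hIisl hIk h1
      obtain ⟨m, f, hm, hf0, hfm, hfprop, hfsd⟩ :=
        ih I' J hI'P hJ hI'isl hJisl hI'k hJk (by omega)
      refine ⟨m + 1, fun j => if j = 0 then I else f (j - 1), by omega, by simp, ?_, ?_, ?_⟩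
      · simp only [Nat.succ_ne_zero, if_false, Nat.add_sub_cancel]
        exact hfm
      · intro j hj
        by_cases hj0 : j = 0
        · subst hj0; simp only [if_pos rfl]
          exact ⟨hI, hIisl, hIk⟩
        · simp only [if_neg hj0]
          exact hfprop (j - 1) (by omega)
      · intro j hj
        by_cases hj0 : j = 0
        · subst hj0
          simp only [if_pos rfl, if_neg (Nat.one_ne_zero), Nat.sub_self]
          rw [hf0]
          exact hI'sd
        · simp only [if_neg hj0, if_neg (by omega : j + 1 ≠ 0)]
          have h := hfsd (j - 1) (by omega)
          have he : j - 1 + 1 = j := by omega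
          rw [he] at h
          have he2 : j + 1 - 1 = j := by omega
          rw [he2]
          exact h
    · by_cases h2 : k < sweep P ℓ J
      · obtain ⟨J', hJ'P, hJ'isl, hJ'k, hJ'sd, hJ'sw⟩ :=
          island_step P hlin hinj hk hJ hJisl hJk h2
        obtain ⟨m, f, hm, hf0, hfm, hfprop, hfsd⟩ :=
          ih I J' hI hJ'P hIisl hJ'isl hIk hJ'k (by omega)
        refine ⟨m + 1, fun j => if j ≤ m then f j else J, by omega, ?_, ?_, ?_, ?_⟩
        · simp only [if_pos (Nat.zero_le m)]
          exact hf0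
        · simp only [if_neg (by omega : ¬ m + 1 ≤ m)]
        · intro j hj
          by_cases hjm : j ≤ m
          · simp only [if_pos hjm]
            exact hfprop j hjm
          · simp only [if_neg hjm]
            exact ⟨hJ, hJisl, hJk⟩
        · intro j hj
          by_cases hjm : j < m
          · simp only [if_pos (by omega : j ≤ m), if_pos (by omega : j + 1 ≤ m)]
            exact hfsd j hjm
          · have hje : j = m := by omega
            rw [hje]
            simp only [if_pos (le_refl m), if_neg (by omega : ¬ m + 1 ≤ m)]
            rw [hfm, symmDiff_comm]
            exact hJ'sd
      · have hgeI := sweep_ge P ℓ hI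
        have hgeJ := sweep_ge P ℓ hJ
        rw [hIk] at hgeI
        rw [hJk] at hgeJ
        have hsI : sweep P ℓ I = k := by omega
        have hsJ : sweep P ℓ J = k := by omega
        have hIJ : I = J := sweep_eq_min hinj hk hI hJ hIk hJk hsI hsJ
        refine ⟨0, fun _ => I, by omega, rfl, hIJ, ?_, ?_⟩
        · intro j hj
          exact ⟨hI, hIisl, hIk⟩
        · intro j hj
          omega

end IslandAux

/-- **Lemma 4.3 (existence part).** Any two `k`-point islands `I`, `J` of an
`n`-point set `P` in general position are connected by a sequence of at most `3n`
steps of `k`-point islands, consecutive ones differing in exactly two points. -/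
theorem island_sequence
    (P : Finset (EuclideanSpace ℝ (Fin 2))) (n : ℕ) (hn : P.card = n)
    (hgp : ∀ p ∈ P, ∀ q ∈ P, ∀ s ∈ P, p ≠ q → p ≠ s → q ≠ s →
      ¬ Collinear ℝ ({p, q, s} : Set (EuclideanSpace ℝ (Fin 2))))
    (k : ℕ) (hk : 1 ≤ k)
    (I J : Finset (EuclideanSpace ℝ (Fin 2)))
    (hI : I ⊆ P) (hJ : J ⊆ P)
    (hIisl : convexHull ℝ (I : Set (EuclideanSpace ℝ (Fin 2))) ∩
      (P : Set (EuclideanSpace ℝ (Fin 2))) = (I : Set (EuclideanSpace ℝ (Fin 2))))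
    (hJisl : convexHull ℝ (J : Set (EuclideanSpace ℝ (Fin 2))) ∩
      (P : Set (EuclideanSpace ℝ (Fin 2))) = (J : Set (EuclideanSpace ℝ (Fin 2))))
    (hIk : I.card = k) (hJk : J.card = k) :
    ∃ (m : ℕ) (f : ℕ → Finset (EuclideanSpace ℝ (Fin 2))),
      m ≤ 3 * n ∧ f 0 = I ∧ f m = J ∧
      (∀ j ≤ m, f j ⊆ P ∧
        convexHull ℝ (f j : Set (EuclideanSpace ℝ (Fin 2))) ∩
          (P : Set (EuclideanSpace ℝ (Fin 2))) = (f j : Set (EuclideanSpace ℝ (Fin 2))) ∧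
        (f j).card = k) ∧
      (∀ j < m, (f j ∆ f (j + 1)).card = 2) := by
  obtain ⟨ℓ, hlin, hinj⟩ := exists_generic_functional P
  obtain ⟨m, f, hm, hf0, hfm, hfprop, hfsd⟩ :=
    island_chain P hlin hinj k hk (sweep P ℓ I + sweep P ℓ J) I J hI hJ hIisl hJisl hIk hJk
      (le_refl _)
  have h1 := sweep_le P ℓ I
  have h2 := sweep_le P ℓ J
  exact ⟨m, f, by omega, hf0, hfm, hfprop, fun j hj => by convert hfsd j hj⟩
end
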